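/- arXiv:0712.2871 — 3 statements merged into one kernel-verified Lean document; each statement's English description precedes it below -/
import Mathlib

section
/- Let (W,S) be a Coxeter system with S finite such that for every proper subset I ⊊ S the standard parabolic subgroup W_I is finite, and let J ⊆ S. If there are infinitely many elements w ∈ W^J whose lower order ideal {u ∈ W^J : u ≤ w} is a chain in the Bruhat order, then the Bruhat order restricted to W^J is a total order. -/
/-- The Bruhat order on a Coxeter group: `u ≤ w` iff some reduced word for `w`
has a sublist (subword) which is a reduced word for `u`. -/
def CoxeterSystem.bruhatLE {B W : Type*} [Group W] {M : CoxeterMatrix B}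
    (cs : CoxeterSystem M W) (u w : W) : Prop :=
  ∃ ω : List B, cs.IsReduced ω ∧ cs.wordProd ω = w ∧
    ∃ ω' : List B, ω'.Sublist ω ∧ cs.IsReduced ω' ∧ cs.wordProd ω' = u

/-- `w` is a minimal length representative of its coset `w W_J`. -/
def CoxeterSystem.IsMinimalRep {B W : Type*} [Group W] {M : CoxeterMatrix B}
    (cs : CoxeterSystem M W) (J : Set B) (w : W) : Prop :=
  ∀ u ∈ Subgroup.closure (cs.simple '' J), cs.length w ≤ cs.length (w * u)

section Aux

variable {B W : Type*} [Group W] {M : CoxeterMatrix B} (cs : CoxeterSystem M W)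

lemma aux_wordProd_mem_closure {I : Set B} {ω : List B} (h : ∀ b ∈ ω, b ∈ I) :
    cs.wordProd ω ∈ Subgroup.closure (cs.simple '' I) := by
  rw [CoxeterSystem.wordProd]
  exact list_prod_mem (by
    intro x hx
    rcases List.mem_map.mp hx with ⟨b, hb, rfl⟩
    exact Subgroup.subset_closure ⟨b, h b hb, rfl⟩)

/-- Any word of length `k` is a sublist of any reduced word of length at least
`k * (C + 1)`, provided every reduced word of length `> C` contains every letter. -/
lemma aux_sublist {C : ℕ}
    (hC : ∀ ω : List B, cs.IsReduced ω → C < ω.length → ∀ i : B, i ∈ ω) :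
    ∀ ρ ω : List B, cs.IsReduced ω → ρ.length * (C + 1) ≤ ω.length → ρ.Sublist ω := by
  intro ρ
  induction ρ with
  | nil => intro ω _ _; exact List.nil_sublist ω
  | cons i ρ ih =>
    intro ω hω hlen
    have hexp : (ρ.length + 1) * (C + 1) = ρ.length * (C + 1) + (C + 1) := by ring
    have hlen' : ρ.length * (C + 1) + (C + 1) ≤ ω.length := by
      rw [← hexp]; simpa using hlen
    have htake : cs.IsReduced (ω.take (C + 1)) := hω.take _
    have htlen : (ω.take (C + 1)).length = C + 1 := by
      rw [List.length_take]; omega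
    have hi : i ∈ ω.take (C + 1) := hC _ htake (by omega) i
    rcases List.append_of_mem hi with ⟨a, b, hab⟩
    have hω_eq : ω = (a ++ [i]) ++ (b ++ ω.drop (C + 1)) := by
      conv_lhs => rw [← List.take_append_drop (C + 1) ω]
      rw [hab]; simp
    set t : List B := b ++ ω.drop (C + 1) with ht
    have htred : cs.IsReduced t := by
      have h := hω.drop (a ++ [i]).length
      rw [hω_eq, List.drop_left] at h
      exact h
    have halen : a.length + 1 + b.length = C + 1 := by
      have h3 := htlen; rw [hab] at h3; simp at h3; omega
    have h1 : ω.length = a.length + 1 + t.length := by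
      rw [hω_eq]; simp [List.length_append]; omega
    have hblen : b.length ≤ t.length := by
      rw [ht]; simp
    have hsub : ρ.Sublist t := ih t htred (by omega)
    have h2 : (i :: t).Sublist ω := by
      rw [hω_eq, List.append_assoc]; exact List.sublist_append_right a (i :: t)
    exact (hsub.cons₂ i).trans h2

/-- If `ℓ(v) * (C + 1) ≤ ℓ(x)` then `v ≤ x` in Bruhat order. -/
lemma aux_bruhatLE_of_long {C : ℕ}
    (hC : ∀ ω : List B, cs.IsReduced ω → C < ω.length → ∀ i : B, i ∈ ω)
    {v x : W} (hv : cs.length v * (C + 1) ≤ cs.length x) : cs.bruhatLE v x := by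
  obtain ⟨ρ, hρlen, hρ⟩ := cs.exists_reduced_word v
  obtain ⟨ω, hωlen, hωx⟩ := cs.exists_reduced_word x
  have hωred : cs.IsReduced ω := by
    rw [CoxeterSystem.IsReduced, ← hωx]; rw [hωx]; exact hωlen
  have hρred : cs.IsReduced ρ := by
    rw [CoxeterSystem.IsReduced, ← hρ]; rw [hρ]; exact hρlen
  have hsub : ρ.Sublist ω :=
    aux_sublist cs hC ρ ω hωred (by rw [← hρred.eq, ← hωred.eq, ← hρ, ← hωx]; exact hv)
  exact ⟨ω, hωred, hωx.symm, ρ, hsub, hρred, hρ.symm⟩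

variable [Finite B]

/-- There is a uniform bound `C` such that every reduced word of length `> C`
contains every letter, provided every proper standard parabolic is finite. -/
lemma aux_exists_bound
    (hpar : ∀ I : Set B, I ≠ Set.univ →
      ((Subgroup.closure (cs.simple '' I) : Subgroup W) : Set W).Finite) :
    ∃ C : ℕ, ∀ ω : List B, cs.IsReduced ω → C < ω.length → ∀ i : B, i ∈ ω := by
  have := Fintype.ofFinite B
  set F : B → Set W :=
    fun i => ((Subgroup.closure (cs.simple '' (Set.univ \ {i})) : Subgroup W) : Set W)
  have hF : ∀ i, (F i).Finite := fun i => hpar _ (by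
    intro h
    have : i ∈ Set.univ \ {i} := by rw [h]; trivial
    simp at this)
  refine ⟨Finset.univ.sup (fun i => ((hF i).toFinset.image cs.length).sup id), ?_⟩
  intro ω hω hlen i
  by_contra hi
  have hmem : cs.wordProd ω ∈ Subgroup.closure (cs.simple '' (Set.univ \ {i})) := by
    refine aux_wordProd_mem_closure cs ?_
    intro b hb
    exact ⟨Set.mem_univ b, fun hbi => hi (hbi ▸ hb)⟩
  have h1 : cs.length (cs.wordProd ω) ≤ ((hF i).toFinset.image cs.length).sup id := by
    refine Finset.le_sup (f := id) ?_
    exact Finset.mem_image_of_mem _ ((hF i).mem_toFinset.mpr hmem)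
  have h2 : ((hF i).toFinset.image cs.length).sup id ≤
      Finset.univ.sup (fun i => ((hF i).toFinset.image cs.length).sup id) :=
    Finset.le_sup (f := fun i => ((hF i).toFinset.image cs.length).sup id) (Finset.mem_univ i)
  rw [hω] at h1
  omega

/-- Since `B` is finite, there are only finitely many elements of bounded length. -/
lemma aux_length_le_finite (N : ℕ) : {w : W | cs.length w ≤ N}.Finite := by
  refine ((List.finite_length_le B N).image cs.wordProd).subset ?_
  intro w hw
  rcases cs.exists_reduced_word w with ⟨ω, hlen, hω⟩
  exact ⟨ω, by rw [Set.mem_setOf_eq, ← hlen.eq, ← hω]; exact hw, hω.symm⟩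

end Aux

/-- If every proper standard parabolic subgroup is finite, and there are infinitely many
elements of `W^J` whose lower order ideal within `W^J` is a chain in the Bruhat order,
then the Bruhat order restricted to `W^J` is a total order. -/
theorem bruhat_total_on_minimal_reps_of_infinitely_many_chains
    {B W : Type*} [Group W] [Finite B] {M : CoxeterMatrix B} (cs : CoxeterSystem M W)
    (hpar : ∀ I : Set B, I ≠ Set.univ →
      ((Subgroup.closure (cs.simple '' I) : Subgroup W) : Set W).Finite)
    (J : Set B)
    (hinf : {w : W | cs.IsMinimalRep J w ∧
      ∀ u u' : W, cs.IsMinimalRep J u → cs.bruhatLE u w →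
        cs.IsMinimalRep J u' → cs.bruhatLE u' w →
          cs.bruhatLE u u' ∨ cs.bruhatLE u' u}.Infinite) :
    ∀ u w : W, cs.IsMinimalRep J u → cs.IsMinimalRep J w →
      cs.bruhatLE u w ∨ cs.bruhatLE w u := by
  intro u w hu hw
  obtain ⟨C, hC⟩ := aux_exists_bound cs hpar
  set N := (max (cs.length u) (cs.length w)) * (C + 1) with hN
  obtain ⟨x, hxS, hxlen⟩ : ∃ x ∈ {w : W | cs.IsMinimalRep J w ∧
      ∀ u u' : W, cs.IsMinimalRep J u → cs.bruhatLE u w →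
        cs.IsMinimalRep J u' → cs.bruhatLE u' w →
          cs.bruhatLE u u' ∨ cs.bruhatLE u' u}, N ≤ cs.length x := by
    by_contra h
    push_neg at h
    exact hinf ((aux_length_le_finite cs N).subset (fun x hx => le_of_lt (h x hx)))
  have hux : cs.bruhatLE u x :=
    aux_bruhatLE_of_long cs hC
      (le_trans (Nat.mul_le_mul_right _ (le_max_left _ _)) hxlen)
  have hwx : cs.bruhatLE w x :=
    aux_bruhatLE_of_long cs hC
      (le_trans (Nat.mul_le_mul_right _ (le_max_right _ _)) hxlen)
  exact hxS.2 u w hu hux hw hwx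
end

section
/- Let Φ be an irreducible finite reduced crystallographic root system with positive system Φ^+ and highest root α_0, and let λ be a coweight. Then ℓ^S(r_{α_0} λ) = ℓ^S(λ) − 1 if α_0(λ) > 1; r_{α_0} λ = λ (so ℓ^S(r_{α_0} λ) = ℓ^S(λ)) if α_0(λ) = 1; and ℓ^S(r_{α_0} λ) = ℓ^S(λ) + 1 if α_0(λ) < 1. -/
open Module

/-- A finite reduced crystallographic root system, spanning the dual of the real vector
space `V`, together with a chosen positive system.  Roots are linear functionals on `V`,
and `coroot` associates to each root its coroot in `V`. -/
structure PosRootSystem (V : Type*) [AddCommGroup V] [Module ℝ V] where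
  /-- the set of roots -/
  roots : Finset (Dual ℝ V)
  /-- the set of positive roots -/
  pos : Finset (Dual ℝ V)
  /-- the coroot of a root -/
  coroot : Dual ℝ V → V
  pos_subset : pos ⊆ roots
  mem_roots_iff : ∀ α, α ∈ roots ↔ (α ∈ pos ∨ -α ∈ pos)
  neg_not_pos : ∀ α ∈ pos, -α ∉ pos
  add_mem_pos : ∀ α ∈ pos, ∀ β ∈ pos, α + β ∈ roots → α + β ∈ pos
  root_coroot_two : ∀ α ∈ roots, α (coroot α) = 2
  crystallographic : ∀ α ∈ roots, ∀ β ∈ roots, ∃ n : ℤ, α (coroot β) = n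
  reduced : ∀ α ∈ roots, ∀ c : ℝ, c • α ∈ roots → c = 1 ∨ c = -1
  reflect_mem : ∀ α ∈ roots, ∀ β ∈ roots, α - α (coroot β) • β ∈ roots
  span_top : Submodule.span ℝ (roots : Set (Dual ℝ V)) = ⊤

namespace PosRootSystem

variable {V : Type*} [AddCommGroup V] [Module ℝ V] (P : PosRootSystem V)

/-- `x` is a coweight: every root takes an integer value on it. -/
def IsCoweight (x : V) : Prop := ∀ α ∈ P.roots, ∃ n : ℤ, α x = n

/-- The function `f(m) = -m` for `m ≤ 0` and `f(m) = m - 1` for `m > 0`. -/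
noncomputable def lenAux (m : ℝ) : ℝ := if m ≤ 0 then -m else m - 1

/-- `ℓ^S(x) = Σ_{α ∈ Φ⁺} f(α(x))`, the length of the minimal coset representative of the
translation `x` in the affine Weyl group modulo the finite Weyl group. -/
noncomputable def lS (x : V) : ℝ := ∑ α ∈ P.pos, lenAux (α x)

/-- The linear reflection `s_β x = x - β(x)·β^∨`. -/
def sRefl (β : Dual ℝ V) (x : V) : V := x - β x • P.coroot β

/-- The affine reflection `r_β x = s_β x + β^∨` in the hyperplane `β = 1`. -/
def rRefl (β : Dual ℝ V) (x : V) : V := P.sRefl β x + P.coroot β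

/-- `(α, α')` is a `β`-positive pair: `α, α'` are positive roots with `α(β^∨) < 0`
and `s_β α = α'`. -/
def IsPosPair (β α α' : Dual ℝ V) : Prop :=
  α ∈ P.pos ∧ α' ∈ P.pos ∧ α (P.coroot β) < 0 ∧ α - α (P.coroot β) • β = α'

/-- `(α, α')` is a `β`-negative pair: `α, α'` are positive roots with `s_β α = -α'`. -/
def IsNegPair (β α α' : Dual ℝ V) : Prop :=
  α ∈ P.pos ∧ α' ∈ P.pos ∧ α - α (P.coroot β) • β = -α'

/-- The opposite sign condition for `(β, x)`: the two members of every `β`-negative pair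
take values of strictly opposite signs on `x`. -/
def OppositeSignCondition (β : Dual ℝ V) (x : V) : Prop :=
  ∀ α α' : Dual ℝ V, P.IsNegPair β α α' →
    (α x < 0 ∧ 0 < α' x) ∨ (0 < α x ∧ α' x < 0)

end PosRootSystem

/-- `θ` is the highest root: `θ` is a positive root and `θ − α` is a nonnegative
combination of positive roots for every root `α`.  (For a finite reduced crystallographic
root system this holds precisely when the system is irreducible and `θ` is its highest
root.) -/
def PosRootSystem.IsHighestRoot {V : Type*} [AddCommGroup V] [Module ℝ V]
    (P : PosRootSystem V) (θ : Module.Dual ℝ V) : Prop :=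
  θ ∈ P.pos ∧ ∀ α ∈ P.roots,
    θ - α ∈ AddSubmonoid.closure (P.pos : Set (Module.Dual ℝ V))

section Aux

open Module

namespace PosRootSystem

variable {V : Type*} [AddCommGroup V] [Module ℝ V] (P : PosRootSystem V)

/-- Coefficient sequence for the orbit of `β` under `s_α ∘ s_β`. -/
private noncomputable def strSeq (p q : ℝ) : ℕ → ℝ × ℝ
  | 0 => (0, 1)
  | n + 1 => ((p * q - 1) * (strSeq p q n).1 + q * (strSeq p q n).2,
      -p * (strSeq p q n).1 - (strSeq p q n).2)

theorem root_ne_zero {α : Dual ℝ V} (hα : α ∈ P.roots) : α ≠ 0 := by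
  intro h
  have h2 := P.root_coroot_two α hα
  rw [h] at h2
  simp at h2

theorem multiset_sum_apply' (M : Multiset (Dual ℝ V)) (v : V) :
    M.sum v = (M.map fun a => a v).sum := by
  induction M using Multiset.induction with
  | empty => simp
  | cons a s ih => simp [ih]

theorem pairing_bound {α β : Dual ℝ V} (hα : α ∈ P.roots) (hβ : β ∈ P.roots)
    (hne : α ≠ β) (hne' : α ≠ -β) {p q : ℤ} (hp : α (P.coroot β) = (p : ℝ))
    (hq : β (P.coroot α) = (q : ℝ)) (hq0 : q ≠ 0) :
    p * q = 1 ∨ p * q = 2 ∨ p * q = 3 := by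
  by_contra hcon
  push_neg at hcon
  obtain ⟨h1, h2, h3⟩ := hcon
  set pr : ℝ := (p : ℝ) with hpr
  set qr : ℝ := (q : ℝ) with hqr
  have hT : (2 : ℝ) ≤ |pr * qr - 2| := by
    have hk : p * q ≤ 0 ∨ 4 ≤ p * q := by
      set k := p * q with hk'
      omega
    have hcast : pr * qr = ((p * q : ℤ) : ℝ) := by push_cast; ring
    rcases hk with h | h
    · have : (pr * qr : ℝ) ≤ 0 := by rw [hcast]; exact_mod_cast h
      rw [abs_of_nonpos (by linarith)]
      linarith
    · have : (4 : ℝ) ≤ pr * qr := by rw [hcast]; exact_mod_cast h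
      rw [abs_of_nonneg (by linarith)]
      linarith
  have hq1 : (1 : ℝ) ≤ |qr| := by
    have h : (1 : ℤ) ≤ |q| := by
      rcases lt_or_gt_of_ne hq0 with h | h
      · rw [abs_of_neg h]; omega
      · rw [abs_of_pos h]; omega
    rw [hqr, ← Int.cast_abs]
    exact_mod_cast h
  set a : ℕ → ℝ := fun n => (strSeq pr qr n).1 with ha
  set b : ℕ → ℝ := fun n => (strSeq pr qr n).2 with hb
  have hrec : ∀ n, a (n + 2) = (pr * qr - 2) * a (n + 1) - a n := by
    intro n
    show (strSeq pr qr (n + 2)).1 = (pr * qr - 2) * (strSeq pr qr (n + 1)).1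
      - (strSeq pr qr n).1
    simp only [strSeq]
    ring
  have hstep : ∀ n, a (n + 1) = (pr * qr - 1) * a n + qr * b n := by
    intro n; simp only [ha, hb, strSeq]
  have hstepb : ∀ n, b (n + 1) = -pr * a n - b n := by
    intro n; simp only [ha, hb, strSeq]
  have ha0 : a 0 = 0 := rfl
  have hb0 : b 0 = 1 := rfl
  have hgrow : ∀ n, |a n| + |qr| ≤ |a (n + 1)| := by
    intro n
    induction n with
    | zero =>
      rw [ha0, hstep 0, ha0, hb0]
      simp
    | succ n ih =>
      have h := hrec n
      have h2 : |(pr * qr - 2) * a (n + 1)| - |a n| ≤ |a (n + 2)| := by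
        rw [h]; exact abs_sub_abs_le_abs_sub _ _
      rw [abs_mul] at h2
      have h3 : 2 * |a (n + 1)| ≤ |pr * qr - 2| * |a (n + 1)| :=
        mul_le_mul_of_nonneg_right hT (abs_nonneg _)
      linarith
  have hmono : StrictMono fun n => |a n| := by
    apply strictMono_nat_of_lt_succ
    intro n
    have := hgrow n
    linarith
  have hw : ∀ n, a n • α + b n • β ∈ P.roots := by
    intro n
    induction n with
    | zero =>
      rw [ha0, hb0]
      simpa using hβ
    | succ n ih =>
      have hv1 : (a n • α + b n • β) (P.coroot β) = a n * pr + b n * 2 := by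
        simp [LinearMap.add_apply, LinearMap.smul_apply, smul_eq_mul, hp,
          P.root_coroot_two β hβ]
      have hr1 := P.reflect_mem _ ih β hβ
      rw [hv1] at hr1
      have he1 : (a n • α + b n • β) - (a n * pr + b n * 2) • β
          = a n • α + (-pr * a n - b n) • β := by module
      rw [he1] at hr1
      have hv2 : (a n • α + (-pr * a n - b n) • β) (P.coroot α)
          = a n * 2 + (-pr * a n - b n) * qr := by
        simp [LinearMap.add_apply, LinearMap.smul_apply, smul_eq_mul, hq,
          P.root_coroot_two α hα]
      have hr2 := P.reflect_mem _ hr1 α hα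
      rw [hv2] at hr2
      have he2 : (a n • α + (-pr * a n - b n) • β)
          - (a n * 2 + (-pr * a n - b n) * qr) • α
          = ((pr * qr - 1) * a n + qr * b n) • α + (-pr * a n - b n) • β := by
        module
      rw [he2] at hr2
      rw [hstep n, hstepb n]
      exact hr2
  have hinj : Function.Injective fun n => a n • α + b n • β := by
    intro m n hmn
    simp only at hmn
    have hab : a m = a n := by
      by_contra habne
      have h5 : (a m - a n) • α = (b n - b m) • β := by
        linear_combination (norm := module) hmn
      have he : a m - a n ≠ 0 := sub_ne_zero.mpr habne
      have h6 : ((a m - a n)⁻¹ * (b n - b m)) • β = α := by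
        rw [mul_smul, ← h5, inv_smul_smul₀ he]
      have h7 : ((a m - a n)⁻¹ * (b n - b m)) • β ∈ P.roots := by
        rw [h6]; exact hα
      rcases P.reduced β hβ _ h7 with hc | hc
      · rw [hc, one_smul] at h6
        exact hne h6.symm
      · rw [hc] at h6
        have h8 : -β = α := by rw [← h6]; module
        exact hne' h8.symm
    have : |a m| = |a n| := by rw [hab]
    exact hmono.injective this
  have hinf : (↑P.roots : Set (Dual ℝ V)).Infinite :=
    Set.infinite_of_injective_forall_mem hinj fun n => Finset.mem_coe.mpr (hw n)
  exact absurd hinf (Set.not_infinite.mpr P.roots.finite_toSet)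

theorem add_mem_roots_key {α β : Dual ℝ V} (hα : α ∈ P.roots) (hβ : β ∈ P.roots)
    (hne : β ≠ -α) {q : ℤ} (hq : β (P.coroot α) = (q : ℝ)) (hq0 : q < 0) :
    α + β ∈ P.roots := by
  obtain ⟨p, hp⟩ := P.crystallographic α hα β hβ
  have hne1 : α ≠ β := by
    rintro rfl
    have h2 := P.root_coroot_two α hα
    rw [hq] at h2
    have : q = 2 := by exact_mod_cast h2
    omega
  have hne2 : α ≠ -β := fun h => hne (by rw [h, neg_neg])
  have hbound := P.pairing_bound hα hβ hne1 hne2 hp hq (by omega)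
  have hp0 : p ≤ -1 := by rcases hbound with h | h | h <;> nlinarith
  rcases eq_or_lt_of_le (show q ≤ -1 by omega) with hq1 | hq1
  · have hr := P.reflect_mem β hβ α hα
    rw [hq, hq1] at hr
    have : β - ((-1 : ℤ) : ℝ) • α = α + β := by push_cast; module
    rwa [this] at hr
  · have hq2 : q ≤ -2 := by omega
    have hp2 : -2 < p := by rcases hbound with h | h | h <;> nlinarith
    have hp1 : p = -1 := by omega
    have hr := P.reflect_mem α hα β hβ
    rw [hp, hp1] at hr
    have : α - ((-1 : ℤ) : ℝ) • β = α + β := by push_cast; module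
    rwa [this] at hr

theorem sum_pos_ne_zero :
    ∀ (n : ℕ) (M : Multiset (Dual ℝ V)), M.card = n →
      (∀ a ∈ M, a ∈ P.pos) → M.sum = 0 → M = 0 := by
  intro n
  induction n using Nat.strong_induction_on with
  | _ n ih =>
    classical
    intro M hcard hmem hsum
    rcases eq_or_ne M 0 with h0 | h0
    · exact h0
    exfalso
    obtain ⟨a, ha⟩ := Multiset.exists_mem_of_ne_zero h0
    obtain ⟨M₁, rfl⟩ : ∃ M₁, M = a ::ₘ M₁ := ⟨M.erase a, (Multiset.cons_erase ha).symm⟩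
    have haP := hmem a (Multiset.mem_cons_self a _)
    have haR := P.pos_subset haP
    have happ : (2 : ℝ) + (M₁.map fun y => y (P.coroot a)).sum = 0 := by
      have h0' := congrArg (fun f : Dual ℝ V => f (P.coroot a)) hsum
      simp only [Multiset.sum_cons, LinearMap.add_apply, LinearMap.zero_apply] at h0'
      rw [P.root_coroot_two a haR, multiset_sum_apply' M₁] at h0'
      exact h0'
    have hex : ∃ b ∈ M₁, b (P.coroot a) < 0 := by
      by_contra hno
      push_neg at hno
      have : (0 : ℝ) ≤ (M₁.map fun y => y (P.coroot a)).sum := by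
        apply Multiset.sum_nonneg
        intro z hz
        obtain ⟨y, hy, rfl⟩ := Multiset.mem_map.mp hz
        exact hno y hy
      linarith
    obtain ⟨b, hb, hbneg⟩ := hex
    have hbP := hmem b (Multiset.mem_cons_of_mem hb)
    have hbR := P.pos_subset hbP
    obtain ⟨qz, hqz⟩ := P.crystallographic b hbR a haR
    have hqz0 : qz < 0 := by
      rw [hqz] at hbneg
      exact_mod_cast hbneg
    have hbne : b ≠ -a := fun h => P.neg_not_pos a haP (h ▸ hbP)
    have habR : a + b ∈ P.roots := P.add_mem_roots_key haR hbR hbne hqz hqz0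
    have habP : a + b ∈ P.pos := P.add_mem_pos a haP b hbP habR
    obtain ⟨M₂, rfl⟩ : ∃ M₂, M₁ = b ::ₘ M₂ := ⟨M₁.erase b, (Multiset.cons_erase hb).symm⟩
    have hn : n = M₂.card + 2 := by
      rw [← hcard]; simp
    have hM3 : (a + b) ::ₘ M₂ = 0 := by
      apply ih (M₂.card + 1) (by omega) _ (by simp)
      · intro z hz
        rcases Multiset.mem_cons.mp hz with h | h
        · rw [h]; exact habP
        · exact hmem z (Multiset.mem_cons_of_mem (Multiset.mem_cons_of_mem h))
      · rw [Multiset.sum_cons, add_assoc]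
        simpa [Multiset.sum_cons] using hsum
    simp at hM3

theorem sum_pos_eq_zero {M : Multiset (Dual ℝ V)}
    (hmem : ∀ a ∈ M, a ∈ P.pos) (h : M.sum = 0) : M = 0 :=
  P.sum_pos_ne_zero M.card M rfl hmem h

end PosRootSystem

end Aux
section Aux2

open Module

namespace PosRootSystem

variable {V : Type*} [AddCommGroup V] [Module ℝ V] (P : PosRootSystem V)

theorem highest_pairing_nonneg {θ : Dual ℝ V} (hθ : P.IsHighestRoot θ)
    {α : Dual ℝ V} (hα : α ∈ P.pos) : 0 ≤ α (P.coroot θ) := by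
  have hθR := P.pos_subset hθ.1
  have hαR := P.pos_subset hα
  obtain ⟨m, hm⟩ := P.crystallographic α hαR θ hθR
  by_contra hneg
  push_neg at hneg
  have hm1 : m ≤ -1 := by
    rw [hm] at hneg
    have : m < 0 := by exact_mod_cast hneg
    omega
  have hγ := P.reflect_mem α hαR θ hθR
  have hC := hθ.2 _ hγ
  obtain ⟨M, hM, hMsum⟩ := AddSubmonoid.exists_multiset_of_mem_closure hC
  rw [hm] at hMsum
  set k : ℕ := (-1 - m).toNat with hk
  have hk0 : (k : ℤ) = -1 - m := Int.toNat_of_nonneg (by omega)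
  have hkr : (k : ℝ) = -1 - (m : ℝ) := by exact_mod_cast hk0
  have hzero : (α ::ₘ (M + Multiset.replicate k θ)).sum = 0 := by
    rw [Multiset.sum_cons, Multiset.sum_add, hMsum, Multiset.sum_replicate,
      ← Nat.cast_smul_eq_nsmul ℝ k θ, hkr]
    module
  have hall : ∀ z ∈ α ::ₘ (M + Multiset.replicate k θ), z ∈ P.pos := by
    intro z hz
    rcases Multiset.mem_cons.mp hz with h | h
    · rw [h]; exact hα
    rcases Multiset.mem_add.mp h with h | h
    · exact hM z h
    · rw [Multiset.eq_of_mem_replicate h]; exact hθ.1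
  have := P.sum_pos_eq_zero hall hzero
  simp at this

theorem eq_highest_of_pairing_two {θ : Dual ℝ V} (hθ : P.IsHighestRoot θ)
    {α : Dual ℝ V} (hα : α ∈ P.pos) (h2 : α (P.coroot θ) = 2) : α = θ := by
  have hθR := P.pos_subset hθ.1
  have hαR := P.pos_subset hα
  have hβR := P.reflect_mem α hαR θ hθR
  rw [h2] at hβR
  rcases (P.mem_roots_iff _).mp hβR with hposb | hnegb
  · exfalso
    have hge := P.highest_pairing_nonneg hθ hposb
    have hv : (α - (2 : ℝ) • θ) (P.coroot θ) = -2 := by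
      simp [LinearMap.sub_apply, LinearMap.smul_apply, smul_eq_mul, h2,
        P.root_coroot_two θ hθR]
      ring
    rw [hv] at hge
    linarith
  · have hζR : -(α - (2 : ℝ) • θ) ∈ P.roots := (P.mem_roots_iff _).mpr (Or.inl hnegb)
    obtain ⟨M₁, hM₁, hs₁⟩ := AddSubmonoid.exists_multiset_of_mem_closure (hθ.2 α hαR)
    obtain ⟨M₂, hM₂, hs₂⟩ := AddSubmonoid.exists_multiset_of_mem_closure (hθ.2 _ hζR)
    have hz : (M₁ + M₂).sum = 0 := by
      rw [Multiset.sum_add, hs₁, hs₂]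
      module
    have h0 : M₁ + M₂ = 0 := by
      apply P.sum_pos_eq_zero _ hz
      intro z hz'
      rcases Multiset.mem_add.mp hz' with h | h
      exacts [hM₁ z h, hM₂ z h]
    have hM10 : M₁ = 0 := by
      have hle : M₁ ≤ M₁ + M₂ := Multiset.le_add_right _ _
      rw [h0] at hle
      exact Multiset.le_zero.mp hle
    rw [hM10, Multiset.sum_zero] at hs₁
    exact (sub_eq_zero.mp hs₁.symm).symm

theorem highest_pairing_cases {θ : Dual ℝ V} (hθ : P.IsHighestRoot θ)
    {α : Dual ℝ V} (hα : α ∈ P.pos) (hne : α ≠ θ) :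
    α (P.coroot θ) = 0 ∨ α (P.coroot θ) = 1 := by
  have hθR := P.pos_subset hθ.1
  have hαR := P.pos_subset hα
  obtain ⟨m, hm⟩ := P.crystallographic α hαR θ hθR
  have h0 : 0 ≤ m := by
    have := P.highest_pairing_nonneg hθ hα
    rw [hm] at this
    exact_mod_cast this
  rcases (by omega : m = 0 ∨ m = 1 ∨ m = 2 ∨ 3 ≤ m) with h | h | h | h
  · left; rw [hm, h]; norm_num
  · right; rw [hm, h]; norm_num
  · exact absurd (P.eq_highest_of_pairing_two hθ hα (by rw [hm, h]; norm_num)) hne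
  · exfalso
    obtain ⟨s, hs⟩ := P.crystallographic θ hθR α hαR
    have hneθα : θ ≠ α := hne.symm
    have hneθα' : θ ≠ -α := fun hh => P.neg_not_pos α hα (hh ▸ hθ.1)
    have hb := P.pairing_bound hθR hαR hneθα hneθα' hs hm (by omega)
    have hs1l : 1 ≤ s := by rcases hb with hb' | hb' | hb' <;> nlinarith
    have hs1u : s < 2 := by rcases hb' : hb with hb'' | hb'' | hb'' <;> nlinarith
    have hs1 : s = 1 := by omega
    have hm3 : m = 3 := by
      rw [hs1] at hb
      omega
    have hsub := P.reflect_mem θ hθR α hαR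
    rw [hs, hs1] at hsub
    have hsub' : θ - ((1 : ℤ) : ℝ) • α = θ - α := by push_cast; module
    rw [hsub'] at hsub
    rcases (P.mem_roots_iff _).mp hsub with hp | hn
    · have hge := P.highest_pairing_nonneg hθ hp
      have hv : (θ - α) (P.coroot θ) = -1 := by
        simp [LinearMap.sub_apply, P.root_coroot_two θ hθR, hm, hm3]
        norm_num
      rw [hv] at hge
      linarith
    · obtain ⟨M, hM, hMs⟩ := AddSubmonoid.exists_multiset_of_mem_closure (hθ.2 α hαR)
      have hz : (-(θ - α) ::ₘ M).sum = 0 := by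
        rw [Multiset.sum_cons, hMs]
        module
      have h0' := P.sum_pos_eq_zero (M := -(θ - α) ::ₘ M) ?_ hz
      · simp at h0'
      · intro z hz'
        rcases Multiset.mem_cons.mp hz' with h | h
        · rw [h]; exact hn
        · exact hM z h

theorem highest_sub_mem_pos {θ : Dual ℝ V} (hθ : P.IsHighestRoot θ)
    {α : Dual ℝ V} (hα : α ∈ P.pos) (h1 : α (P.coroot θ) = 1) : θ - α ∈ P.pos := by
  have hθR := P.pos_subset hθ.1
  have hαR := P.pos_subset hα
  have hsub := P.reflect_mem α hαR θ hθR
  rw [h1, one_smul] at hsub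
  rcases (P.mem_roots_iff _).mp hsub with hp | hn
  · exfalso
    have hge := P.highest_pairing_nonneg hθ hp
    have hv : (α - θ) (P.coroot θ) = -1 := by
      simp only [LinearMap.sub_apply]
      rw [h1, P.root_coroot_two θ hθR]
      norm_num
    rw [hv] at hge
    linarith
  · rw [neg_sub] at hn
    exact hn

theorem lenAux_int_one_sub (u : ℤ) : lenAux (1 - (u : ℝ)) = lenAux (u : ℝ) := by
  unfold lenAux
  rcases le_or_gt u 0 with h | h
  · have h1 : (u : ℝ) ≤ 0 := by exact_mod_cast h
    rw [if_neg (by linarith), if_pos h1]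
    ring
  · have h1 : (1 : ℝ) ≤ (u : ℝ) := by exact_mod_cast h
    rw [if_pos (by linarith), if_neg (by linarith)]
    ring

end PosRootSystem

end Aux2
/-- For the highest root `α₀` of an irreducible system: `ℓ^S(r_{α₀} λ) = ℓ^S(λ) − 1` if
`α₀(λ) > 1`; `r_{α₀} λ = λ` if `α₀(λ) = 1`; and `ℓ^S(r_{α₀} λ) = ℓ^S(λ) + 1` if
`α₀(λ) < 1`. -/
theorem lS_rRefl_highest {V : Type*} [AddCommGroup V] [Module ℝ V]
    (P : PosRootSystem V) (θ : Module.Dual ℝ V) (hθ : P.IsHighestRoot θ) (x : V)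
    (hx : P.IsCoweight x) :
    (1 < θ x → P.lS (P.rRefl θ x) = P.lS x - 1) ∧
    (θ x = 1 → P.rRefl θ x = x) ∧
    (θ x < 1 → P.lS (P.rRefl θ x) = P.lS x + 1) := by
  classical
  have hθP := hθ.1
  have hθR := P.pos_subset hθP
  have hθ2 := P.root_coroot_two θ hθR
  obtain ⟨T, hT⟩ := hx θ hθR
  set y := P.rRefl θ x with hy
  have hyv : ∀ α : Module.Dual ℝ V, α y = α x + (1 - θ x) * α (P.coroot θ) := by
    intro α
    rw [hy]
    show α (x - θ x • P.coroot θ + P.coroot θ) = _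
    rw [map_add, map_sub, map_smul]
    simp only [smul_eq_mul]
    ring
  have hθy : θ y = 2 - θ x := by
    rw [hyv θ, hθ2]; ring
  have hcases : ∀ α ∈ P.pos.erase θ, α (P.coroot θ) = 0 ∨ α (P.coroot θ) = 1 :=
    fun α ha => P.highest_pairing_cases hθ (Finset.mem_erase.mp ha).2
      (Finset.mem_erase.mp ha).1
  have hmapmem : ∀ α ∈ P.pos.erase θ,
      (if α (P.coroot θ) = 0 then α else θ - α) ∈ P.pos.erase θ := by
    intro α ha
    rcases hcases α ha with h | h
    · rw [if_pos h]; exact ha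
    · rw [if_neg (by rw [h]; norm_num)]
      refine Finset.mem_erase.mpr
        ⟨?_, P.highest_sub_mem_pos hθ (Finset.mem_erase.mp ha).2 h⟩
      intro heq
      have hα0 : α = 0 := sub_eq_self.mp heq
      exact P.root_ne_zero (P.pos_subset (Finset.mem_erase.mp ha).2) hα0
  have hmapinv : ∀ α ∈ P.pos.erase θ,
      (if (if α (P.coroot θ) = 0 then α else θ - α) (P.coroot θ) = 0
        then (if α (P.coroot θ) = 0 then α else θ - α)
        else θ - (if α (P.coroot θ) = 0 then α else θ - α)) = α := by
    intro α ha
    rcases hcases α ha with h | h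
    · simp only [if_pos h]
    · have hcond : ¬α (P.coroot θ) = 0 := by rw [h]; norm_num
      have hval : (θ - α) (P.coroot θ) = 1 := by
        simp only [LinearMap.sub_apply]
        rw [hθ2, h]; norm_num
      have hcond2 : ¬(θ - α) (P.coroot θ) = 0 := by rw [hval]; norm_num
      simp only [if_neg hcond, if_neg hcond2, sub_sub_cancel]
  have hsum_eq : ∑ α ∈ P.pos.erase θ, PosRootSystem.lenAux (α y)
      = ∑ α ∈ P.pos.erase θ, PosRootSystem.lenAux (α x) := by
    refine Finset.sum_bij' (fun α _ => if α (P.coroot θ) = 0 then α else θ - α)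
      (fun α _ => if α (P.coroot θ) = 0 then α else θ - α)
      hmapmem hmapmem hmapinv hmapinv ?_
    intro α ha
    try dsimp only
    rcases hcases α ha with h | h
    · rw [if_pos h, hyv α, h, mul_zero, add_zero]
    · rw [if_neg (by rw [h]; norm_num)]
      obtain ⟨A, hA⟩ := hx α (P.pos_subset (Finset.mem_erase.mp ha).2)
      have h1 : α y = 1 - ((T - A : ℤ) : ℝ) := by
        rw [hyv α, h, mul_one, hT, hA]; push_cast; ring
      have h2 : (θ - α) x = ((T - A : ℤ) : ℝ) := by
        simp only [LinearMap.sub_apply]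
        rw [hT, hA]; push_cast; ring
      rw [h1, h2, PosRootSystem.lenAux_int_one_sub]
  have hsplit : ∀ z : V, P.lS z
      = PosRootSystem.lenAux (θ z) + ∑ α ∈ P.pos.erase θ, PosRootSystem.lenAux (α z) := by
    intro z
    rw [PosRootSystem.lS, ← Finset.add_sum_erase _ _ hθP]
  refine ⟨fun h1 => ?_, fun h1 => ?_, fun h1 => ?_⟩
  · have hT1 : (1 : ℤ) < T := by
      rw [hT] at h1; exact_mod_cast h1
    have hT2 : (2 : ℝ) ≤ θ x := by
      rw [hT]; exact_mod_cast (by omega : (2 : ℤ) ≤ T)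
    have e1 : PosRootSystem.lenAux (θ y) = θ x - 2 := by
      rw [hθy]
      simp only [PosRootSystem.lenAux]
      rw [if_pos (by linarith)]
      ring
    have e2 : PosRootSystem.lenAux (θ x) = θ x - 1 := by
      simp only [PosRootSystem.lenAux]
      rw [if_neg (by linarith)]
    rw [hsplit y, hsplit x, hsum_eq, e1, e2]
    ring
  · rw [hy]
    show x - θ x • P.coroot θ + P.coroot θ = x
    rw [h1, one_smul]
    abel
  · have hT1 : T < (1 : ℤ) := by
      rw [hT] at h1; exact_mod_cast h1
    have hT2 : θ x ≤ (0 : ℝ) := by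
      rw [hT]; exact_mod_cast (by omega : T ≤ (0 : ℤ))
    have e1 : PosRootSystem.lenAux (θ y) = 1 - θ x := by
      rw [hθy]
      simp only [PosRootSystem.lenAux]
      rw [if_neg (by linarith)]
      ring
    have e2 : PosRootSystem.lenAux (θ x) = -θ x := by
      simp only [PosRootSystem.lenAux]
      rw [if_pos hT2]
    rw [hsplit y, hsplit x, hsum_eq, e1, e2]
    ring
end

section
/- Let Φ be an irreducible finite reduced crystallographic root system with positive system Φ^+ and highest root α_0, and let λ be a nonzero element of the coroot lattice (the ℤ-span of the coroots) which is dominant, i.e. α(λ) ≥ 0 for all α ∈ Φ^+. Then α_0(λ) ≥ 2. -/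
open Module

namespace PosRootSystem

open PosRootSystem

variable {V : Type*} [AddCommGroup V] [Module ℝ V] (P : PosRootSystem V)

open scoped Classical

/-- The reflection of a functional `α` in a root `β`, on the dual side. -/
noncomputable def sr (β α : Dual ℝ V) : Dual ℝ V := α - α (P.coroot β) • β

lemma neg_root {α : Dual ℝ V} (h : α ∈ P.roots) : -α ∈ P.roots := by
  rw [P.mem_roots_iff] at h ⊢
  rw [neg_neg]
  exact h.symm

lemma sr_mem {α β : Dual ℝ V} (hα : α ∈ P.roots) (hβ : β ∈ P.roots) :
    P.sr β α ∈ P.roots := P.reflect_mem α hα β hβ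

lemma sr_neg (β α : Dual ℝ V) : P.sr β (-α) = -(P.sr β α) := by
  apply LinearMap.ext
  intro v
  simp only [sr, LinearMap.sub_apply, LinearMap.neg_apply, LinearMap.smul_apply, smul_eq_mul]
  ring

lemma sr_sr {β : Dual ℝ V} (hβ : β ∈ P.roots) (α : Dual ℝ V) :
    P.sr β (P.sr β α) = α := by
  have h2 : β (P.coroot β) = 2 := P.root_coroot_two β hβ
  apply LinearMap.ext
  intro v
  simp only [sr, LinearMap.sub_apply, LinearMap.smul_apply, smul_eq_mul, h2]
  ring

/-- The negatives of the positive roots. -/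
noncomputable def negpos : Finset (Dual ℝ V) := P.pos.image (fun a => -a)

lemma roots_eq_union : P.roots = P.pos ∪ P.negpos := by
  ext α
  simp only [Finset.mem_union, negpos, Finset.mem_image, P.mem_roots_iff]
  constructor
  · rintro (h | h)
    · exact Or.inl h
    · exact Or.inr ⟨-α, h, by rw [neg_neg]⟩
  · rintro (h | ⟨a, ha, rfl⟩)
    · exact Or.inl h
    · exact Or.inr (by rwa [neg_neg])

lemma disjoint_pos_negpos : Disjoint P.pos P.negpos := by
  rw [Finset.disjoint_left]
  rintro α hα hmem
  simp only [negpos, Finset.mem_image] at hmem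
  obtain ⟨a, ha, rfl⟩ := hmem
  exact P.neg_not_pos a ha hα

/-- Sum over all roots of a sign-symmetric function is twice the sum over positive roots. -/
lemma sum_roots_eq (g : Dual ℝ V → ℝ) (hg : ∀ α, g (-α) = g α) :
    ∑ α ∈ P.roots, g α = (∑ α ∈ P.pos, g α) + (∑ α ∈ P.pos, g α) := by
  rw [P.roots_eq_union, Finset.sum_union P.disjoint_pos_negpos]
  congr 1
  rw [negpos, Finset.sum_image (by intro a _ b _ h; exact neg_injective h)]
  exact Finset.sum_congr rfl fun a _ => hg a

/-- Reflection in a root permutes the set of all roots. -/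
lemma sum_roots_sr {β : Dual ℝ V} (hβ : β ∈ P.roots) (g : Dual ℝ V → ℝ) :
    ∑ α ∈ P.roots, g (P.sr β α) = ∑ α ∈ P.roots, g α := by
  apply Finset.sum_nbij' (i := P.sr β) (j := P.sr β)
  · intro a ha; exact P.sr_mem ha hβ
  · intro a ha; exact P.sr_mem ha hβ
  · intro a _; exact P.sr_sr hβ a
  · intro a _; exact P.sr_sr hβ a
  · intro a _; rfl

/-- Sum over positive roots of a sign-symmetric function is invariant under reflections. -/
lemma sum_pos_sr {β : Dual ℝ V} (hβ : β ∈ P.roots) (g : Dual ℝ V → ℝ)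
    (hg : ∀ α, g (-α) = g α) :
    ∑ α ∈ P.pos, g (P.sr β α) = ∑ α ∈ P.pos, g α := by
  have h1 := P.sum_roots_eq (fun α => g (P.sr β α)) (fun α => by simp only [P.sr_neg, hg])
  have h2 := P.sum_roots_eq g hg
  have h3 := P.sum_roots_sr hβ g
  linarith

/-- A canonical invariant symmetric bilinear form. -/
noncomputable def B (y z : V) : ℝ := ∑ α ∈ P.pos, α y * α z

lemma B_self_nonneg (y : V) : 0 ≤ P.B y y :=
  Finset.sum_nonneg fun α _ => mul_self_nonneg (α y)

lemma eq_zero_of_forall_roots_eq_zero {y : V} (h : ∀ α ∈ P.roots, α y = 0) : y = 0 := by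
  rw [← Module.forall_dual_apply_eq_zero_iff ℝ y]
  intro φ
  have hφ : φ ∈ Submodule.span ℝ (P.roots : Set (Dual ℝ V)) := by
    rw [P.span_top]; trivial
  induction hφ using Submodule.span_induction with
  | mem f hf => exact h f (by exact_mod_cast hf)
  | zero => simp
  | add f g _ _ hf hg => simp [hf, hg]
  | smul a f _ hf => simp [hf]

lemma eq_zero_of_B_self_eq_zero {y : V} (h : P.B y y = 0) : y = 0 := by
  apply P.eq_zero_of_forall_roots_eq_zero
  have hall : ∀ α ∈ P.pos, α y = 0 := by
    intro α hα
    have := (Finset.sum_eq_zero_iff_of_nonneg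
      (fun α (_ : α ∈ P.pos) => mul_self_nonneg (α y))).mp h α hα
    exact mul_self_eq_zero.mp this
  intro α hα
  rcases (P.mem_roots_iff α).mp hα with h1 | h1
  · exact hall α h1
  · have := hall (-α) h1
    simpa [neg_eq_zero] using this

lemma B_pos_of_ne_zero {y : V} (h : y ≠ 0) : 0 < P.B y y :=
  lt_of_le_of_ne (P.B_self_nonneg y) fun h' => h (P.eq_zero_of_B_self_eq_zero h'.symm)

/-- Invariance of the form under the Weyl reflections. -/
lemma B_invariant {β : Dual ℝ V} (hβ : β ∈ P.roots) (y z : V) :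
    P.B (y - β y • P.coroot β) (z - β z • P.coroot β) = P.B y z := by
  have key : ∀ α : Dual ℝ V, α (y - β y • P.coroot β) = (P.sr β α) y ∧
      α (z - β z • P.coroot β) = (P.sr β α) z := by
    intro α
    constructor <;>
    · simp only [sr, map_sub, map_smul, smul_eq_mul, LinearMap.sub_apply,
        LinearMap.smul_apply]
      ring
  calc P.B (y - β y • P.coroot β) (z - β z • P.coroot β)
      = ∑ α ∈ P.pos, (P.sr β α) y * (P.sr β α) z := by
        simp only [B]
        apply Finset.sum_congr rfl
        intro α _
        rw [(key α).1, (key α).2]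
    _ = ∑ α ∈ P.pos, α y * α z :=
        P.sum_pos_sr hβ (fun γ => γ y * γ z) (fun γ => by simp)
    _ = P.B y z := rfl

lemma B_neg_right (y z : V) : P.B y (-z) = -P.B y z := by
  simp [B, ← Finset.sum_neg_distrib]

lemma B_sub_right (y z w : V) : P.B y (z - w) = P.B y z - P.B y w := by
  simp [B, map_sub, mul_sub, Finset.sum_sub_distrib]

lemma B_add_right (y z w : V) : P.B y (z + w) = P.B y z + P.B y w := by
  simp [B, map_add, mul_add, Finset.sum_add_distrib]

lemma B_smul_left (a : ℝ) (y z : V) : P.B (a • y) z = a * P.B y z := by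
  simp [B, map_smul, smul_eq_mul, Finset.mul_sum, mul_assoc]

lemma B_sub_left (y w z : V) : P.B (y - w) z = P.B y z - P.B w z := by
  simp [B, map_sub, sub_mul, Finset.sum_sub_distrib]

lemma B_zero_right (y : V) : P.B y 0 = 0 := by simp [B]

/-- The "radial" formula `2⟨y, β^∨⟩ = β(y)·⟨β^∨, β^∨⟩`. -/
lemma B_radial {β : Dual ℝ V} (hβ : β ∈ P.roots) (y : V) :
    2 * P.B y (P.coroot β) = β y * P.B (P.coroot β) (P.coroot β) := by
  have h2 : β (P.coroot β) = 2 := P.root_coroot_two β hβ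
  have hinv := P.B_invariant hβ y (P.coroot β)
  have hrefl : P.coroot β - β (P.coroot β) • P.coroot β = -(P.coroot β) := by
    rw [h2]
    rw [show ((2 : ℝ) • P.coroot β) = P.coroot β + P.coroot β by rw [two_smul]]
    abel
  rw [hrefl, P.B_neg_right, P.B_sub_left, P.B_smul_left] at hinv
  linarith

lemma Q_pos {β : Dual ℝ V} (hβ : β ∈ P.roots) : 0 < P.B (P.coroot β) (P.coroot β) := by
  have h2 : β (P.coroot β) = 2 := P.root_coroot_two β hβ
  rcases (P.mem_roots_iff β).mp hβ with h1 | h1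
  · have hle : β (P.coroot β) * β (P.coroot β) ≤ P.B (P.coroot β) (P.coroot β) :=
      Finset.single_le_sum (fun α _ => mul_self_nonneg (α (P.coroot β))) h1
    rw [h2] at hle; linarith
  · have hle : (-β) (P.coroot β) * (-β) (P.coroot β) ≤ P.B (P.coroot β) (P.coroot β) :=
      Finset.single_le_sum (fun α _ => mul_self_nonneg (α (P.coroot β))) h1
    simp only [LinearMap.neg_apply, h2] at hle; linarith

/-- Condition on list entries: each is plus or minus a coroot. -/
def GenList (l : List V) : Prop :=
  ∀ y ∈ l, ∃ β ∈ P.roots, y = P.coroot β ∨ y = -P.coroot β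

lemma list_int {l : List V} (hl : P.GenList l) {α : Dual ℝ V} (hα : α ∈ P.roots) :
    ∃ n : ℤ, α l.sum = n := by
  induction l with
  | nil => exact ⟨0, by simp⟩
  | cons a l ih =>
    obtain ⟨n, hn⟩ := ih (fun y hy => hl y (List.mem_cons_of_mem a hy))
    obtain ⟨β, hβ, hcase⟩ := hl a (List.mem_cons_self (a := a) (l := l))
    obtain ⟨m, hm⟩ := P.crystallographic α hα β hβ
    rcases hcase with rfl | rfl
    · exact ⟨m + n, by rw [List.sum_cons, map_add, hm, hn]; push_cast; ring⟩
    · exact ⟨-m + n, by rw [List.sum_cons, map_add, map_neg, hm, hn]; push_cast; ring⟩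

lemma B_list_sum (y : V) (l : List V) : P.B y l.sum = (l.map (P.B y)).sum := by
  induction l with
  | nil => simp [P.B_zero_right]
  | cons a l ih => simp [P.B_add_right, ih]

lemma list_sum_nonpos {l : List ℝ} (h : ∀ a ∈ l, a ≤ 0) : l.sum ≤ 0 := by
  induction l with
  | nil => simp
  | cons a l ih =>
    have h1 := h a (List.mem_cons_self (a := a) (l := l))
    have h2 := ih (fun b hb => h b (List.mem_cons_of_mem a hb))
    simpa using add_nonpos h1 h2

/-- The descent: if every root takes value ≤ 1 on a sum of (plus-or-minus) coroots,
that sum is zero. -/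
lemma descent : ∀ (n : ℕ) (l : List V), l.length ≤ n → P.GenList l →
    (∀ α ∈ P.roots, α l.sum ≤ 1) → l.sum = 0 := by
  intro n
  induction n with
  | zero =>
    intro l hlen _ _
    rw [List.length_eq_zero_iff.mp (Nat.le_zero.mp hlen)]
    rfl
  | succ n ih =>
    intro l hlen hgen hbound
    by_cases hzero : l.sum = 0
    · exact hzero
    set lam := l.sum with hlam
    have hQ : 0 < P.B lam lam := P.B_pos_of_ne_zero hzero
    -- find a generator with positive pairing against lam
    have hex : ∃ y ∈ l, 0 < P.B lam y := by
      by_contra hcon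
      push_neg at hcon
      have : (l.map (P.B lam)).sum ≤ 0 := by
        apply list_sum_nonpos
        intro a ha
        obtain ⟨y, hy, rfl⟩ := List.mem_map.mp ha
        exact hcon y hy
      rw [← P.B_list_sum] at this
      linarith
    obtain ⟨y, hy, hBy⟩ := hex
    obtain ⟨β, hβ, hcase⟩ := hgen y hy
    -- split the list at y
    obtain ⟨s, t, rfl⟩ := List.append_of_mem hy
    have hlen' : (s ++ t).length ≤ n := by
      rw [List.length_append, List.length_cons] at hlen
      rw [List.length_append]
      omega
    have hgen' : P.GenList (s ++ t) := by
      intro z hz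
      apply hgen
      rcases List.mem_append.mp hz with hz | hz
      · exact List.mem_append.mpr (Or.inl hz)
      · exact List.mem_append.mpr (Or.inr (List.mem_cons_of_mem y hz))
    have hsum' : (s ++ t).sum = lam - y := by
      rw [hlam, List.sum_append, List.sum_append, List.sum_cons]
      abel
    -- integrality of β(lam)
    obtain ⟨m, hm⟩ := P.list_int hgen hβ
    rw [← hlam] at hm
    have hQβ : 0 < P.B (P.coroot β) (P.coroot β) := P.Q_pos hβ
    have hrad : 2 * P.B lam (P.coroot β) = β lam * P.B (P.coroot β) (P.coroot β) :=
      P.B_radial hβ lam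
    rcases hcase with rfl | hneg
    · -- y = coroot β
      have hpos : 0 < β lam := by nlinarith
      have hle1 : β lam ≤ 1 := hbound β hβ
      have hm1 : β lam = 1 := by
        have h1' : 0 < m := by exact_mod_cast (hm ▸ hpos : (0:ℝ) < (m:ℝ))
        have h2' : m ≤ 1 := by exact_mod_cast (hm ▸ hle1 : ((m:ℝ)) ≤ 1)
        have : m = 1 := by omega
        rw [hm, this]
        norm_num
      have hbound' : ∀ α ∈ P.roots, α (s ++ t).sum ≤ 1 := by
        intro α hα
        have hsr := hbound (P.sr β α) (P.sr_mem hα hβ)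
        rw [hsum', map_sub]
        have : (P.sr β α) lam = α lam - α (P.coroot β) * β lam := by
          simp [sr]
        rw [this, hm1, mul_one] at hsr
        linarith
      have h0 := ih (s ++ t) hlen' hgen' hbound'
      rw [hsum'] at h0
      have : lam = P.coroot β := by
        have := sub_eq_zero.mp h0
        exact this
      rw [this, P.root_coroot_two β hβ] at hm1
      norm_num at hm1
    · -- y = -coroot β
      subst hneg
      have hneg' : β lam < 0 := by
        rw [P.B_neg_right] at hBy
        nlinarith
      have hgem1 : -1 ≤ β lam := by
        have := hbound (-β) (P.neg_root hβ)
        simp only [LinearMap.neg_apply] at this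
        linarith
      have hm1 : β lam = -1 := by
        have h1' : m < 0 := by exact_mod_cast (hm ▸ hneg' : (m:ℝ) < 0)
        have h2' : (-1:ℤ) ≤ m := by exact_mod_cast (hm ▸ hgem1 : (-1:ℝ) ≤ (m:ℝ))
        have : m = -1 := by omega
        rw [hm, this]
        norm_num
      have hbound' : ∀ α ∈ P.roots, α (s ++ t).sum ≤ 1 := by
        intro α hα
        have hsr := hbound (P.sr β α) (P.sr_mem hα hβ)
        rw [hsum', map_sub, map_neg]
        have : (P.sr β α) lam = α lam - α (P.coroot β) * β lam := by
          simp [sr]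
        rw [this, hm1] at hsr
        linarith
      have h0 := ih (s ++ t) hlen' hgen' hbound'
      rw [hsum'] at h0
      have : lam = -P.coroot β := sub_eq_zero.mp h0
      rw [this, map_neg, P.root_coroot_two β hβ] at hm1
      norm_num at hm1

end PosRootSystem

/-- If `λ` is a nonzero dominant element of the coroot lattice of an irreducible finite
reduced crystallographic root system with highest root `α₀`, then `α₀(λ) ≥ 2`. -/
theorem highestRoot_ge_two_of_dominant {V : Type*} [AddCommGroup V] [Module ℝ V]
    (P : PosRootSystem V) (θ : Module.Dual ℝ V) (hθ : P.IsHighestRoot θ)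
    (x : V)
    (hlat : x ∈ AddSubgroup.closure (P.coroot '' (P.roots : Set (Module.Dual ℝ V))))
    (hx0 : x ≠ 0)
    (hdom : ∀ α ∈ P.pos, 0 ≤ α x) :
    2 ≤ θ x := by
  classical
  by_contra hcon
  push_neg at hcon
  -- extract a list representation of x
  have hmem : x ∈ AddSubmonoid.closure
      ((P.coroot '' (P.roots : Set (Module.Dual ℝ V))) ∪
        -(P.coroot '' (P.roots : Set (Module.Dual ℝ V)))) := by
    rw [← AddSubgroup.closure_toAddSubmonoid]
    exact hlat
  obtain ⟨l, hl, hsum⟩ := AddSubmonoid.exists_list_of_mem_closure hmem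
  have hgen : PosRootSystem.GenList P l := by
    intro y hy
    rcases hl y hy with h | h
    · obtain ⟨β, hβ, rfl⟩ := h
      exact ⟨β, hβ, Or.inl rfl⟩
    · rw [Set.mem_neg] at h
      obtain ⟨β, hβ, hβ'⟩ := h
      exact ⟨β, hβ, Or.inr (by rw [hβ', neg_neg])⟩
  -- θ is a root
  have hθr : θ ∈ P.roots := P.pos_subset hθ.1
  -- every element of the monoid closure of positive roots is nonneg on x
  have hcl : ∀ f ∈ AddSubmonoid.closure (P.pos : Set (Module.Dual ℝ V)), 0 ≤ f x := by
    intro f hf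
    induction hf using AddSubmonoid.closure_induction with
    | mem g hg => exact hdom g (by exact_mod_cast hg)
    | zero => simp
    | add g h _ _ hg hh => rw [LinearMap.add_apply]; linarith
  -- every root value is at most θ x
  have hle : ∀ α ∈ P.roots, α x ≤ θ x := by
    intro α hα
    have := hcl (θ - α) (hθ.2 α hα)
    rw [LinearMap.sub_apply] at this
    linarith
  -- θ x is an integer, < 2, hence ≤ 1
  obtain ⟨m, hm⟩ := PosRootSystem.list_int P hgen hθr
  rw [hsum] at hm
  have hθ1 : θ x ≤ 1 := by
    rw [hm] at hcon ⊢
    have : m < 2 := by exact_mod_cast hcon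
    exact_mod_cast (by omega : m ≤ 1)
  -- descent gives x = 0, contradiction
  have hbound : ∀ α ∈ P.roots, α l.sum ≤ 1 := by
    intro α hα
    rw [hsum]
    exact le_trans (hle α hα) hθ1
  have := PosRootSystem.descent P l.length l le_rfl hgen hbound
  rw [hsum] at this
  exact hx0 this
end
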